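/- Let ρ and ξ be random variables with 0 ≤ ρ ≤ 1, P(ρ > 0) > 0, and 1 ≤ ξ ≤ M for some M > 1. Set λ_c = 1 / (E[ρ]·E[1/ξ]). If λ > λ_c, then the equation E[λ·E[ρ] / (ξ + λ·x·E[ρ])] = 1 has a unique solution x* in (0, ∞). If λ < λ_c, this equation has no solution in (0, ∞). -/

import Mathlib

open MeasureTheory Filter Set Real Topology

/-- If `λ > λ_c = 1/(E[ρ]·E[1/ξ])` the equation `E[λE[ρ]/(ξ+λxE[ρ])] = 1` has a unique
positive solution; if `λ < λ_c` it has none. -/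
theorem stmt_1
    {Ω : Type*} [MeasurableSpace Ω] (ℙ : Measure Ω) [IsProbabilityMeasure ℙ]
    (ρ ξ : Ω → ℝ) (hρm : Measurable ρ) (hξm : Measurable ξ)
    (hρ : ∀ ω, 0 ≤ ρ ω ∧ ρ ω ≤ 1) (hρpos : 0 < ℙ {ω | 0 < ρ ω})
    (M : ℝ) (hM : 1 < M) (hξ : ∀ ω, 1 ≤ ξ ω ∧ ξ ω ≤ M)
    (lam lamc : ℝ) (hlam : 0 < lam)
    (hlamc : lamc = 1 / ((∫ ω', ρ ω' ∂ℙ) * ∫ ω, 1 / ξ ω ∂ℙ)) :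
    (lam > lamc →
      ∃! x : ℝ, x ∈ Ioi (0 : ℝ) ∧
        (∫ ω, lam * (∫ ω', ρ ω' ∂ℙ) / (ξ ω + lam * x * (∫ ω', ρ ω' ∂ℙ)) ∂ℙ) = 1) ∧
    (lam < lamc →
      ∀ x : ℝ, x ∈ Ioi (0 : ℝ) →
        (∫ ω, lam * (∫ ω', ρ ω' ∂ℙ) / (ξ ω + lam * x * (∫ ω', ρ ω' ∂ℙ)) ∂ℙ) ≠ 1) := by
  set E : ℝ := ∫ ω', ρ ω' ∂ℙ with hEdef
  set I : ℝ := ∫ ω, 1 / ξ ω ∂ℙ with hIdef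
  have hξ1 : ∀ ω, (1:ℝ) ≤ ξ ω := fun ω => (hξ ω).1
  have hξpos : ∀ ω, (0:ℝ) < ξ ω := fun ω => lt_of_lt_of_le one_pos (hξ1 ω)
  -- integrability of ρ
  have hρint : Integrable ρ ℙ := by
    refine (integrable_const (1:ℝ)).mono' hρm.aestronglyMeasurable ?_
    filter_upwards with ω
    rw [Real.norm_eq_abs, abs_of_nonneg (hρ ω).1]
    exact (hρ ω).2
  -- E > 0
  have hE : 0 < E := by
    rw [hEdef, MeasureTheory.integral_pos_iff_support_of_nonneg (fun ω => (hρ ω).1) hρint]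
    refine lt_of_lt_of_le hρpos (measure_mono ?_)
    intro ω hω
    exact ne_of_gt hω
  -- integrability of 1/ξ
  have hinvint : Integrable (fun ω => 1 / ξ ω) ℙ := by
    refine (integrable_const (1:ℝ)).mono' (measurable_const.div hξm).aestronglyMeasurable ?_
    filter_upwards with ω
    rw [Real.norm_eq_abs, abs_of_nonneg (div_nonneg zero_le_one (le_of_lt (hξpos ω)))]
    rw [div_le_one (hξpos ω)]
    exact hξ1 ω
  -- I > 0
  have hI : 0 < I := by
    have h1 : (1/M : ℝ) ≤ I := by
      rw [hIdef]
      have := MeasureTheory.integral_mono (μ := ℙ) (integrable_const (1/M)) hinvint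
        (fun ω => by
          have := (hξ ω).2
          have hMpos : (0:ℝ) < M := lt_trans one_pos hM
          exact one_div_le_one_div_of_le (hξpos ω) this)
      simpa using this
    have : (0:ℝ) < 1/M := by positivity
    linarith
  have hEI : 0 < E * I := mul_pos hE hI
  have hlamE : 0 < lam * E := mul_pos hlam hE
  -- the function F
  set F : ℝ → Ω → ℝ := fun x ω => lam * E / (ξ ω + lam * x * E) with hFdef
  have hden : ∀ x ω, 0 ≤ x → (1:ℝ) ≤ ξ ω + lam * x * E := by
    intro x ω hx
    have : 0 ≤ lam * x * E := by positivity
    linarith [hξ1 ω]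
  have hFnonneg : ∀ x ω, 0 ≤ x → 0 ≤ F x ω := by
    intro x ω hx
    have := hden x ω hx
    positivity
  have hFmeas : ∀ x, Measurable (F x) := fun x =>
    measurable_const.div (hξm.add measurable_const)
  have hFint : ∀ x, 0 ≤ x → Integrable (F x) ℙ := by
    intro x hx
    refine (integrable_const (lam * E)).mono' (hFmeas x).aestronglyMeasurable ?_
    filter_upwards with ω
    rw [Real.norm_eq_abs, abs_of_nonneg (hFnonneg x ω hx)]
    have h1 := hden x ω hx
    calc lam * E / (ξ ω + lam * x * E) ≤ lam * E / 1 := by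
          apply div_le_div_of_nonneg_left (le_of_lt hlamE) one_pos h1
      _ = lam * E := div_one _
  -- value at 0
  have hF0 : (∫ ω, F 0 ω ∂ℙ) = lam * E * I := by
    have : ∀ ω, F 0 ω = lam * E * (1 / ξ ω) := by
      intro ω
      show lam * E / (ξ ω + lam * 0 * E) = lam * E * (1 / ξ ω)
      rw [mul_zero, zero_mul, add_zero, div_eq_mul_one_div]
    calc (∫ ω, F 0 ω ∂ℙ) = ∫ ω, lam * E * (1 / ξ ω) ∂ℙ := by
          exact integral_congr_ae (Eventually.of_forall this)
      _ = lam * E * I := by rw [hIdef, MeasureTheory.integral_const_mul]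
  -- strict monotonicity
  have hstrict : ∀ x y : ℝ, 0 ≤ x → x < y → (∫ ω, F y ω ∂ℙ) < ∫ ω, F x ω ∂ℙ := by
    intro x y hx hxy
    have hy : 0 ≤ y := le_of_lt (lt_of_le_of_lt hx hxy)
    have hpt : ∀ ω, F y ω < F x ω := by
      intro ω
      apply div_lt_div_of_pos_left hlamE
      · exact lt_of_lt_of_le one_pos (hden x ω hx)
      · have : lam * x * E < lam * y * E := by
          have := mul_lt_mul_of_pos_right (mul_lt_mul_of_pos_left hxy hlam) hE
          linarith
        linarith
    have hpos : 0 < ∫ ω, (F x ω - F y ω) ∂ℙ := by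
      rw [MeasureTheory.integral_pos_iff_support_of_nonneg
        (fun ω => sub_nonneg.mpr (le_of_lt (hpt ω)))
        ((hFint x hx).sub (hFint y hy))]
      have : Function.support (fun ω => F x ω - F y ω) = Set.univ := by
        ext ω
        simp [Function.support, sub_ne_zero.mpr (ne_of_gt (hpt ω))]
      rw [this]
      simp
    rw [MeasureTheory.integral_sub (hFint x hx) (hFint y hy)] at hpos
    linarith
  -- continuity on [0,1]
  have hcont : ContinuousOn (fun x => ∫ ω, F x ω ∂ℙ) (Icc (0:ℝ) 1) := by
    intro x₀ hx₀
    apply ContinuousAt.continuousWithinAt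
    have hδ : (0:ℝ) < 1 / (2 * (lam * E)) := by positivity
    refine MeasureTheory.continuousAt_of_dominated
      (bound := fun _ => 2 * (lam * E)) ?_ ?_ (integrable_const _) ?_
    · filter_upwards with x
      exact (hFmeas x).aestronglyMeasurable
    · have hmem : Ioi (-(1 / (2 * (lam * E)))) ∈ 𝓝 x₀ := by
        apply Ioi_mem_nhds
        linarith [hx₀.1]
      filter_upwards [hmem] with x hx
      filter_upwards with ω
      have hxlb : -(1 / (2 * (lam * E))) < x := hx
      have hd : (1/2 : ℝ) < ξ ω + lam * x * E := by
        have h1 : lam * x * E > lam * (-(1 / (2 * (lam * E)))) * E := by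
          have := mul_lt_mul_of_pos_right (mul_lt_mul_of_pos_left hxlb hlam) hE
          linarith
        have h2 : lam * (-(1 / (2 * (lam * E)))) * E = -(1/2) := by
          field_simp
        rw [h2] at h1
        linarith [hξ1 ω]
      have hdpos : (0:ℝ) < ξ ω + lam * x * E := by linarith
      rw [Real.norm_eq_abs, abs_of_nonneg (by positivity)]
      rw [div_le_iff₀ hdpos]
      nlinarith
    · filter_upwards with ω
      have hdpos : (0:ℝ) < ξ ω + lam * x₀ * E :=
        lt_of_lt_of_le one_pos (hden x₀ ω hx₀.1)
      exact ContinuousAt.div continuousAt_const (by fun_prop) (ne_of_gt hdpos)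
  constructor
  · -- lam > lamc : unique solution
    intro hgt
    have h0 : 1 < lam * E * I := by
      rw [hlamc] at hgt
      have h' : 1 / (E * I) < lam := hgt
      rw [div_lt_iff₀ hEI] at h'
      nlinarith
    have h1 : (∫ ω, F 1 ω ∂ℙ) < 1 := by
      have hb : ∀ ω, F 1 ω ≤ lam * E / (1 + lam * E) := by
        intro ω
        apply div_le_div_of_nonneg_left (le_of_lt hlamE) (by positivity)
        have := hξ1 ω
        linarith
      have hle : (∫ ω, F 1 ω ∂ℙ) ≤ lam * E / (1 + lam * E) := by
        have := MeasureTheory.integral_mono (hFint 1 zero_le_one)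
          (integrable_const (lam * E / (1 + lam * E))) hb
        simpa using this
      have : lam * E / (1 + lam * E) < 1 := by
        rw [div_lt_one (by positivity)]
        linarith
      linarith
    have hivt := intermediate_value_Icc' (zero_le_one) hcont
    have hmem : (1:ℝ) ∈ Icc ((∫ ω, F 1 ω ∂ℙ)) ((∫ ω, F 0 ω ∂ℙ)) := by
      constructor
      · linarith
      · rw [hF0]; linarith
    obtain ⟨x, hxmem, hxeq0⟩ := hivt hmem
    have hxeq : (∫ ω, F x ω ∂ℙ) = 1 := hxeq0
    have hxpos : 0 < x := by
      rcases lt_or_eq_of_le hxmem.1 with h | h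
      · exact h
      · exfalso
        rw [← h] at hxeq
        rw [hF0] at hxeq
        linarith
    refine ⟨x, ⟨hxpos, hxeq⟩, ?_⟩
    rintro y ⟨hy, hyeq0⟩
    have hyeq : (∫ ω, F y ω ∂ℙ) = 1 := hyeq0
    rcases lt_trichotomy y x with h | h | h
    · exfalso
      have := hstrict y x (le_of_lt hy) h
      rw [hxeq, hyeq] at this
      exact lt_irrefl 1 this
    · exact h
    · exfalso
      have := hstrict x y (le_of_lt hxpos) h
      rw [hxeq, hyeq] at this
      exact lt_irrefl 1 this
  · -- lam < lamc : no solution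
    intro hlt x hx
    have h0 : lam * E * I < 1 := by
      rw [hlamc] at hlt
      rw [lt_div_iff₀ hEI] at hlt
      nlinarith
    have h2 := hstrict 0 x le_rfl hx
    rw [hF0] at h2
    intro heq
    have heq' : (∫ ω, F x ω ∂ℙ) = 1 := heq
    rw [heq'] at h2
    linarith
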